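/- Define τ(x,ξ) = −x₂ξ₁ + x₁ξ₂ + x₄ξ₃ − x₃ξ₄ and ς(x,ξ) = x₃ξ₁ + x₄ξ₂ + x₁ξ₃ + x₂ξ₄. Let (x(s), ξ(s)) be a C¹ solution of the Hamiltonian system ẋ = −τ(x,ξ)·T(x) + ς(x,ξ)·X(x), ξ̇ = −τ(x,ξ)·T(ξ) − ς(x,ξ)·X(ξ), with x(0) ∈ H. Then x(s) ∈ H for all s, the curve x is horizontal with respect to span{T,X} (γ ≡ 0 along x), and its horizontal coordinates satisfy α(s) = τ(x(s),ξ(s)) and β(s) = ς(x(s),ξ(s)) for all s. -/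

import Mathlib

open Real Set

noncomputable section

/-- Pseudo-Euclidean inner product of signature (2,2) on ℝ⁴. -/
def ip (x y : Fin 4 → ℝ) : ℝ :=
  -(x 0 * y 0) - x 1 * y 1 + x 2 * y 2 + x 3 * y 3

/-- Anti-de Sitter space H = {x : ⟨x,x⟩ = -1}. -/
def AdS : Set (Fin 4 → ℝ) := {x | ip x x = -1}

/-- The vector field T(x) = (−x₂, x₁, x₄, −x₃). -/
def Tf (x : Fin 4 → ℝ) : Fin 4 → ℝ := ![-(x 1), x 0, x 3, -(x 2)]

/-- The vector field X(x) = (x₃, x₄, x₁, x₂). -/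
def Xf (x : Fin 4 → ℝ) : Fin 4 → ℝ := ![x 2, x 3, x 0, x 1]

/-- The vector field Y(x) = (x₄, −x₃, −x₂, x₁). -/
def Yf (x : Fin 4 → ℝ) : Fin 4 → ℝ := ![x 3, -(x 2), -(x 1), x 0]

/-- The normal vector field N(x) = x. -/
def Nf (x : Fin 4 → ℝ) : Fin 4 → ℝ := x

/-- α(s) = ⟨ċ(s), T(c(s))⟩. -/
def alphaC (c : ℝ → Fin 4 → ℝ) (s : ℝ) : ℝ := ip (deriv c s) (Tf (c s))

/-- β(s) = ⟨ċ(s), X(c(s))⟩. -/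
def betaC (c : ℝ → Fin 4 → ℝ) (s : ℝ) : ℝ := ip (deriv c s) (Xf (c s))

/-- γ(s) = ⟨ċ(s), Y(c(s))⟩. -/
def gammaC (c : ℝ → Fin 4 → ℝ) (s : ℝ) : ℝ := ip (deriv c s) (Yf (c s))

/-- τ(x,ξ) = −x₂ξ₁ + x₁ξ₂ + x₄ξ₃ − x₃ξ₄. -/
def tauF (x ξ : Fin 4 → ℝ) : ℝ :=
  -(x 1 * ξ 0) + x 0 * ξ 1 + x 3 * ξ 2 - x 2 * ξ 3

/-- ς(x,ξ) = x₃ξ₁ + x₄ξ₂ + x₁ξ₃ + x₂ξ₄. -/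
def sigmaF (x ξ : Fin 4 → ℝ) : ℝ :=
  x 2 * ξ 0 + x 3 * ξ 1 + x 0 * ξ 2 + x 1 * ξ 3

/-- solutions of the sub-Lorentzian Hamiltonian system
ẋ = −τ·T(x) + ς·X(x), ξ̇ = −τ·T(ξ) − ς·X(ξ) starting on AdS stay on AdS,
are horizontal with respect to span{T,X}, and have α = τ, β = ς. -/
theorem hamiltonian_solutions_horizontal (x ξ : ℝ → Fin 4 → ℝ)
    (hx : ∀ s, HasDerivAt x
      ((-(tauF (x s) (ξ s))) • Tf (x s) + (sigmaF (x s) (ξ s)) • Xf (x s)) s)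
    (hξ : ∀ s, HasDerivAt ξ
      ((-(tauF (x s) (ξ s))) • Tf (ξ s) + (-(sigmaF (x s) (ξ s))) • Xf (ξ s)) s)
    (h0 : x 0 ∈ AdS) :
    ∀ s, x s ∈ AdS ∧ gammaC x s = 0 ∧
      alphaC x s = tauF (x s) (ξ s) ∧ betaC x s = sigmaF (x s) (ξ s) := by
  -- component derivatives
  have hv : ∀ s i, ((-(tauF (x s) (ξ s))) • Tf (x s) + (sigmaF (x s) (ξ s)) • Xf (x s)) i
      = (-(tauF (x s) (ξ s))) * Tf (x s) i + (sigmaF (x s) (ξ s)) * Xf (x s) i := by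
    intro s i; simp
  have hxi : ∀ s i, HasDerivAt (fun t => x t i)
      ((-(tauF (x s) (ξ s))) * Tf (x s) i + (sigmaF (x s) (ξ s)) * Xf (x s) i) s := by
    intro s i
    have := hasDerivAt_pi.1 (hx s) i
    rwa [hv] at this
  -- F = ip x x has derivative 0
  have hF : ∀ s, HasDerivAt (fun t => ip (x t) (x t)) 0 s := by
    intro s
    have h0' := hxi s 0; have h1 := hxi s 1; have h2 := hxi s 2; have h3 := hxi s 3
    have : HasDerivAt (fun t => ip (x t) (x t))
        (-(((-(tauF (x s) (ξ s))) * Tf (x s) 0 + (sigmaF (x s) (ξ s)) * Xf (x s) 0) * x s 0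
           + x s 0 * ((-(tauF (x s) (ξ s))) * Tf (x s) 0 + (sigmaF (x s) (ξ s)) * Xf (x s) 0))
         - (((-(tauF (x s) (ξ s))) * Tf (x s) 1 + (sigmaF (x s) (ξ s)) * Xf (x s) 1) * x s 1
           + x s 1 * ((-(tauF (x s) (ξ s))) * Tf (x s) 1 + (sigmaF (x s) (ξ s)) * Xf (x s) 1))
         + (((-(tauF (x s) (ξ s))) * Tf (x s) 2 + (sigmaF (x s) (ξ s)) * Xf (x s) 2) * x s 2
           + x s 2 * ((-(tauF (x s) (ξ s))) * Tf (x s) 2 + (sigmaF (x s) (ξ s)) * Xf (x s) 2))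
         + (((-(tauF (x s) (ξ s))) * Tf (x s) 3 + (sigmaF (x s) (ξ s)) * Xf (x s) 3) * x s 3
           + x s 3 * ((-(tauF (x s) (ξ s))) * Tf (x s) 3 + (sigmaF (x s) (ξ s)) * Xf (x s) 3))) s := by
      unfold ip
      exact (((((h0'.mul h0').neg).sub (h1.mul h1)).add (h2.mul h2)).add (h3.mul h3))
    convert this using 1
    simp [Tf, Xf, tauF, sigmaF]
    ring
  have hconst : ∀ s, ip (x s) (x s) = -1 := by
    have hd : Differentiable ℝ (fun t => ip (x t) (x t)) := fun s => (hF s).differentiableAt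
    have hz : ∀ s, deriv (fun t => ip (x t) (x t)) s = 0 := fun s => (hF s).deriv
    intro s
    have := is_const_of_deriv_eq_zero hd hz s 0
    simpa [this, AdS] using h0
  intro s
  have hder : deriv x s = (-(tauF (x s) (ξ s))) • Tf (x s) + (sigmaF (x s) (ξ s)) • Xf (x s) :=
    (hx s).deriv
  have hxx := hconst s
  refine ⟨hconst s, ?_, ?_, ?_⟩
  · unfold gammaC ip
    rw [hder]
    simp [Tf, Xf, Yf, tauF, sigmaF]
    ring
  · unfold alphaC ip
    rw [hder]
    simp [Tf, Xf, tauF, sigmaF]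
    unfold ip at hxx
    linear_combination (x s 1 * ξ s 0 - x s 0 * ξ s 1 - x s 3 * ξ s 2 + x s 2 * ξ s 3) * hxx
  · unfold betaC ip
    rw [hder]
    simp [Tf, Xf, tauF, sigmaF]
    unfold ip at hxx
    linear_combination (-(x s 2 * ξ s 0 + x s 3 * ξ s 1 + x s 0 * ξ s 2 + x s 1 * ξ s 3)) * hxx
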